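/- Define the chain of upward-closed sets U₀ = ↑m and U_{k+1} = U_k ∪ { w ∈ ℕ^P : ∃t ∈ T, t enabled at w and w →^t w' with w' ∈ U_k }. Then the chain (U_k) stabilizes: there exists n with U_n = U_{n+1}, and U_n = { w ∈ ℕ^P : ∃ firing sequence σ ∈ T*, w →^σ w' for some w' ≥ m }. Consequently, m is coverable from m₀ if and only if m₀ ∈ U_n. -/

import Mathlib

section PetriNet

variable {P T : Type*}

/-- Discrete enabledness: `m(p) ≥ Pre(p,t)` for all places `p`. -/
def Enabled (Pre : P → T → ℕ) (m : P → ℕ) (t : T) : Prop :=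
  ∀ p, Pre p t ≤ m p

/-- Discrete firing of transition `t` at marking `m`, yielding `m'`. -/
def DFire (Pre Post : P → T → ℕ) (m : P → ℕ) (t : T) (m' : P → ℕ) : Prop :=
  Enabled Pre m t ∧ ∀ p, m' p = m p + Post p t - Pre p t

/-- One discrete step. -/
def DStep (Pre Post : P → T → ℕ) (m m' : P → ℕ) : Prop :=
  ∃ t, DFire Pre Post m t m'

/-- Discrete reachability. -/
def DReach (Pre Post : P → T → ℕ) : (P → ℕ) → (P → ℕ) → Prop :=
  Relation.ReflTransGen (DStep Pre Post)

/-- Continuous firing of `t` by amount `q` (amount is at most the enabling degree). -/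
def CFire (Pre Post : P → T → ℕ) (m : P → ℚ) (q : ℚ) (t : T) (m' : P → ℚ) : Prop :=
  0 ≤ q ∧ (∀ p, q * (Pre p t : ℚ) ≤ m p) ∧
    ∀ p, m' p = m p + q * ((Post p t : ℚ) - (Pre p t : ℚ))

/-- One continuous step. -/
def CStep (Pre Post : P → T → ℕ) (m m' : P → ℚ) : Prop :=
  ∃ t q, CFire Pre Post m q t m'

/-- Continuous (Q-)reachability. -/
def QReach (Pre Post : P → T → ℕ) : (P → ℚ) → (P → ℚ) → Prop :=
  Relation.ReflTransGen (CStep Pre Post)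

/-- A Q-firing sequence `σ` from `m` to `m'`. -/
inductive CSeq (Pre Post : P → T → ℕ) : (P → ℚ) → List (ℚ × T) → (P → ℚ) → Prop
  | nil (m : P → ℚ) : CSeq Pre Post m [] m
  | cons {m m' m'' : P → ℚ} {q : ℚ} {t : T} {σ : List (ℚ × T)} :
      CFire Pre Post m q t m' → CSeq Pre Post m' σ m'' →
      CSeq Pre Post m ((q, t) :: σ) m''

/-- Q-Parikh image of a firing sequence. -/
def Parikh [DecidableEq T] (σ : List (ℚ × T)) (t : T) : ℚ :=
  (σ.map (fun qt => if qt.2 = t then qt.1 else 0)).sum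

/-- The firing set `fs(N, m)`: supports of Parikh images of Q-firing sequences from `m`. -/
def Fs [DecidableEq T] (Pre Post : P → T → ℕ) (m : P → ℚ) : Set (Set T) :=
  {S | ∃ σ m', CSeq Pre Post m σ m' ∧ S = {t | Parikh σ t ≠ 0}}

/-- A trap: non-empty `Q` with `Q• ⊆ •Q`. -/
def IsTrap (Pre Post : P → T → ℕ) (Q : Finset P) : Prop :=
  Q.Nonempty ∧ ∀ t, (∃ p ∈ Q, 0 < Pre p t) → ∃ p ∈ Q, 0 < Post p t

/-- A siphon: non-empty `Q` with `•Q ⊆ Q•`. -/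
def IsSiphon (Pre Post : P → T → ℕ) (Q : Finset P) : Prop :=
  Q.Nonempty ∧ ∀ t, (∃ p ∈ Q, 0 < Post p t) → ∃ p ∈ Q, 0 < Pre p t

end PetriNet

/-- The backward-coverability chain: `U 0 = ↑m`,
`U (k+1) = U k ∪ { w | ∃ t, w →ᵗ w' ∈ U k }`. -/
def UChain {P T : Type*} (Pre Post : P → T → ℕ) (m : P → ℕ) : ℕ → Set (P → ℕ)
  | 0 => {w | ∀ p, m p ≤ w p}
  | k + 1 => UChain Pre Post m k ∪
      {w | ∃ t w', DFire Pre Post w t w' ∧ w' ∈ UChain Pre Post m k}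

section Aux

variable {P T : Type*} (Pre Post : P → T → ℕ) (m : P → ℕ)

lemma uchain_mono_succ (k : ℕ) : UChain Pre Post m k ⊆ UChain Pre Post m (k+1) :=
  Set.subset_union_left

lemma uchain_mono {j k : ℕ} (h : j ≤ k) : UChain Pre Post m j ⊆ UChain Pre Post m k := by
  induction h with
  | refl => exact le_refl _
  | step _ ih => exact ih.trans (uchain_mono_succ Pre Post m _)

lemma uchain_upward : ∀ k, ∀ w v : P → ℕ, w ∈ UChain Pre Post m k → (∀ p, w p ≤ v p) →
    v ∈ UChain Pre Post m k := by
  intro k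
  induction k with
  | zero => intro w v hw hle p; exact (hw p).trans (hle p)
  | succ k ih =>
    rintro w v (hw | ⟨t, w', ⟨hen, heq⟩, hw'⟩) hle
    · exact Or.inl (ih w v hw hle)
    · refine Or.inr ⟨t, fun p => v p + Post p t - Pre p t,
        ⟨fun p => (hen p).trans (hle p), fun p => rfl⟩, ih w' _ hw' fun p => ?_⟩
      rw [heq p]
      exact Nat.sub_le_sub_right (Nat.add_le_add_right (hle p) _) _

lemma uchain_subset_cover : ∀ k, UChain Pre Post m k ⊆
    {w | ∃ w', DReach Pre Post w w' ∧ ∀ p, m p ≤ w' p} := by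
  intro k
  induction k with
  | zero => intro w hw; exact ⟨w, Relation.ReflTransGen.refl, hw⟩
  | succ k ih =>
    rintro w (hw | ⟨t, w', hf, hw'⟩)
    · exact ih hw
    · obtain ⟨w'', hr, hm⟩ := ih hw'
      exact ⟨w'', Relation.ReflTransGen.head ⟨t, hf⟩ hr, hm⟩

lemma cover_mem_uchain {w w' : P → ℕ} (hr : DReach Pre Post w w') (hm : ∀ p, m p ≤ w' p) :
    ∃ k, w ∈ UChain Pre Post m k := by
  induction hr using Relation.ReflTransGen.head_induction_on with
  | refl => exact ⟨0, hm⟩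
  | head hstep _ ih =>
    obtain ⟨k, hk⟩ := ih
    obtain ⟨t, hf⟩ := hstep
    exact ⟨k + 1, Or.inr ⟨t, _, hf, hk⟩⟩

lemma uchain_stab_of [Fintype P] : ∃ n,
    UChain Pre Post m n = UChain Pre Post m (n + 1) := by
  by_contra h
  push_neg at h
  have hex : ∀ n, ∃ w, w ∈ UChain Pre Post m (n+1) ∧ w ∉ UChain Pre Post m n := by
    intro n
    rcases Set.exists_of_ssubset ((uchain_mono_succ Pre Post m n).ssubset_of_ne (h n)) with
      ⟨w, hw1, hw2⟩
    exact ⟨w, hw1, hw2⟩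
  choose f hf1 hf2 using hex
  obtain ⟨i, j, hij, hle⟩ :=
    (Set.isPWO_of_wellQuasiOrderedLE (Set.univ : Set (P → ℕ))).exists_lt (f := f) (fun n => Set.mem_univ _)
  exact hf2 j (uchain_mono Pre Post m hij (uchain_upward Pre Post m (i+1) _ _ (hf1 i) hle))

end Aux

/-- the chain stabilizes, its limit is exactly the set of markings
from which `m` can be covered, and hence `m` is coverable from `m₀` iff
`m₀ ∈ U n`. -/
theorem stmt16 {P T : Type*} [Fintype P] (Pre Post : P → T → ℕ) (m : P → ℕ) :
    ∃ n, UChain Pre Post m n = UChain Pre Post m (n + 1) ∧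
      UChain Pre Post m n =
        {w | ∃ w', DReach Pre Post w w' ∧ ∀ p, m p ≤ w' p} ∧
      ∀ m₀ : P → ℕ,
        ((∃ w', DReach Pre Post m₀ w' ∧ ∀ p, m p ≤ w' p) ↔
          m₀ ∈ UChain Pre Post m n) := by
  obtain ⟨n, hn⟩ := uchain_stab_of Pre Post m
  have hconst : ∀ k, UChain Pre Post m (n + k) = UChain Pre Post m n := by
    intro k
    induction k with
    | zero => rfl
    | succ k ih =>
      have hstep : ∀ a b : ℕ, UChain Pre Post m a = UChain Pre Post m b →
          UChain Pre Post m (a+1) = UChain Pre Post m (b+1) := by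
        intro a b h
        show UChain Pre Post m a ∪ _ = UChain Pre Post m b ∪ _
        rw [h]
      have : n + (k + 1) = (n + k) + 1 := rfl
      rw [this, hstep _ _ ih]
      exact hn.symm
  have heq : UChain Pre Post m n =
      {w | ∃ w', DReach Pre Post w w' ∧ ∀ p, m p ≤ w' p} := by
    apply Set.Subset.antisymm (uchain_subset_cover Pre Post m n)
    rintro w ⟨w', hr, hm⟩
    obtain ⟨k, hk⟩ := cover_mem_uchain Pre Post m hr hm
    rcases le_total k n with h | h
    · exact uchain_mono Pre Post m h hk
    · obtain ⟨d, rfl⟩ := Nat.exists_eq_add_of_le h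
      rw [← hconst d]; exact hk
  exact ⟨n, hn, heq, fun m₀ => by rw [heq]; rfl⟩
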